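/- For every n ∈ ℕ, the set Q_n^f of n-dimensional cells of the filtration M^f of an HDML model M through the closure set C(φ) is finite, and its size is bounded above by 2^{|φ|·N}, where N = n! · Σ_{k=0}^{n} 2^k/(n−k)!. -/

import Mathlib

inductive HForm (Phi : Type) : Type
  | atom : Phi → HForm Phi
  | bot  : HForm Phi
  | imp  : HForm Phi → HForm Phi → HForm Phi
  | diaS : HForm Phi → HForm Phi
  | diaT : HForm Phi → HForm Phi
  deriving DecidableEq

namespace HForm

variable {Phi : Type}

def neg (φ : HForm Phi) : HForm Phi := imp φ bot

def top : HForm Phi := neg bot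

def or' (φ ψ : HForm Phi) : HForm Phi := imp (neg φ) ψ

def and' (φ ψ : HForm Phi) : HForm Phi := neg (imp φ (neg ψ))

def iff' (φ ψ : HForm Phi) : HForm Phi := and' (imp φ ψ) (imp ψ φ)

def boxS (φ : HForm Phi) : HForm Phi := neg (diaS (neg φ))

def boxT (φ : HForm Phi) : HForm Phi := neg (diaT (neg φ))

/-- The size of a formula: the number of occurrences of atomic propositions, `⊥`,
Boolean connectives `→`, and modal symbols `⟨s⟩`, `⟨t⟩`. -/
def size : HForm Phi → ℕ
  | atom _ => 1
  | bot => 1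
  | imp a b => size a + size b + 1
  | diaS a => size a + 1
  | diaT a => size a + 1

/-- `iterT i ψ` is `⟨t⟩^i ψ`, the `i`-fold application of `⟨t⟩` to `ψ`. -/
def iterT : ℕ → HForm Phi → HForm Phi
  | 0, ψ => ψ
  | n + 1, ψ => diaT (iterT n ψ)

/-- The subformula closure `C(φ)`. -/
def closure [DecidableEq Phi] : HForm Phi → Finset (HForm Phi)
  | atom p => {atom p}
  | bot => {bot}
  | imp a b => insert (imp a b) (closure a ∪ closure b)
  | diaS a => insert (diaS a) (closure a)
  | diaT a => insert (diaT a) (closure a)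

/-- The upwards concurrency degree `↑deg`. -/
def updeg : HForm Phi → ℕ
  | atom _ => 0
  | bot => 0
  | imp a b => max (updeg a) (updeg b)
  | diaS a => updeg a + 1
  | diaT a => updeg a - 1

end HForm

/-- The data of a cubical set: a family of cells `Q_n := cell n` together with, for each
`n ≥ 1` and each `1 ≤ i ≤ n`, source and target maps `s_i, t_i : Q_n → Q_{n-1}`
(here `src n i` and `tgt n i` are the maps `s_{i+1}, t_{i+1} : Q_{n+1} → Q_n` for `i : Fin (n+1)`). -/
structure PreCubical : Type 1 where
  cell : ℕ → Type
  src : ∀ n : ℕ, Fin (n + 1) → cell (n + 1) → cell n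
  tgt : ∀ n : ℕ, Fin (n + 1) → cell (n + 1) → cell n

/-- The cubical laws `α_i ∘ β_j = β_{j-1} ∘ α_i` for `1 ≤ i < j ≤ n` and `α, β ∈ {s, t}`:
with 0-based indices `i j : Fin (n+1)`, the 1-based indices are `I = i+1` and `J = j+2`,
so that `I < J` becomes `i ≤ j`. -/
def PreCubical.CubicalLaws (H : PreCubical) : Prop :=
  (∀ (n : ℕ) (i j : Fin (n + 1)), (i : ℕ) ≤ (j : ℕ) → ∀ q : H.cell (n + 2),
      H.src n i (H.src (n + 1) j.succ q) = H.src n j (H.src (n + 1) i.castSucc q)) ∧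
  (∀ (n : ℕ) (i j : Fin (n + 1)), (i : ℕ) ≤ (j : ℕ) → ∀ q : H.cell (n + 2),
      H.src n i (H.tgt (n + 1) j.succ q) = H.tgt n j (H.src (n + 1) i.castSucc q)) ∧
  (∀ (n : ℕ) (i j : Fin (n + 1)), (i : ℕ) ≤ (j : ℕ) → ∀ q : H.cell (n + 2),
      H.tgt n i (H.src (n + 1) j.succ q) = H.src n j (H.tgt (n + 1) i.castSucc q)) ∧
  (∀ (n : ℕ) (i j : Fin (n + 1)), (i : ℕ) ≤ (j : ℕ) → ∀ q : H.cell (n + 2),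
      H.tgt n i (H.tgt (n + 1) j.succ q) = H.tgt n j (H.tgt (n + 1) i.castSucc q))

/-- HDML satisfaction over the data of a cubical set with a valuation. -/
def PreCubical.Sat (H : PreCubical) {Phi : Type} (V : ∀ n : ℕ, H.cell n → Set Phi) :
    HForm Phi → ∀ n : ℕ, H.cell n → Prop
  | .atom p, n, q => p ∈ V n q
  | .bot, _, _ => False
  | .imp a b, n, q => PreCubical.Sat H V a n q → PreCubical.Sat H V b n q
  | .diaS a, n, q => ∃ (q' : H.cell (n + 1)) (i : Fin (n + 1)),
      H.src n i q' = q ∧ PreCubical.Sat H V a (n + 1) q'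
  | .diaT _, 0, _ => False
  | .diaT a, m + 1, q => ∃ i : Fin (m + 1), PreCubical.Sat H V a m (H.tgt m i q)

/-- An HDML model: a cubical set together with a valuation. -/
structure HDMLModel (Phi : Type) : Type 1 where
  pre : PreCubical
  laws : pre.CubicalLaws
  val : ∀ n : ℕ, pre.cell n → Set Phi

/-- Satisfaction `M,q ⊨ φ` in an HDML model. -/
def HDMLModel.Sat {Phi : Type} (M : HDMLModel Phi) : HForm Phi → ∀ n : ℕ, M.pre.cell n → Prop :=
  M.pre.Sat M.val

/-- The filtration equivalence: at dimension `0` it is modal equivalence over the closure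
`C(φ)`; at dimension `n+1` it additionally requires all corresponding sources and targets to
be related at dimension `n` (this realizes the classes `[q_n]` of the filtration). -/
def FiltRel {Phi : Type} [DecidableEq Phi] (M : HDMLModel Phi) (φ : HForm Phi) :
    ∀ n : ℕ, M.pre.cell n → M.pre.cell n → Prop
  | 0, q, q' => ∀ ψ ∈ φ.closure, (M.Sat ψ 0 q ↔ M.Sat ψ 0 q')
  | n + 1, q, q' =>
      (∀ ψ ∈ φ.closure, (M.Sat ψ (n + 1) q ↔ M.Sat ψ (n + 1) q')) ∧
      ∀ i : Fin (n + 1),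
        FiltRel M φ n (M.pre.src n i q) (M.pre.src n i q') ∧
        FiltRel M φ n (M.pre.tgt n i q) (M.pre.tgt n i q')

/-- The filtration class `[q]` of a cell `q`. -/
def filtClass {Phi : Type} [DecidableEq Phi] (M : HDMLModel Phi) (φ : HForm Phi) (n : ℕ)
    (q : M.pre.cell n) : Set (M.pre.cell n) :=
  {x | FiltRel M φ n q x}

/-- `Nbound n = n! · Σ_{k=0}^{n} 2^k/(n−k)!  =  Σ_{k=0}^{n} 2^k · n!/(n−k)!`. -/
def Nbound (n : ℕ) : ℕ := ∑ k ∈ Finset.range (n + 1), 2 ^ k * n.descFactorial k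


/-- Signature type for dimension `n`. -/
def Sig {Phi : Type} [DecidableEq Phi] (φ : HForm Phi) : ℕ → Type
  | 0 => {ψ // ψ ∈ φ.closure} → Prop
  | n + 1 => ({ψ // ψ ∈ φ.closure} → Prop) × (Fin (n + 1) → Sig φ n × Sig φ n)

noncomputable def SigFintype {Phi : Type} [DecidableEq Phi] (φ : HForm Phi) :
    ∀ n, Fintype (Sig φ n)
  | 0 => by unfold Sig; infer_instance
  | n + 1 => by unfold Sig; have := SigFintype φ n; infer_instance

attribute [local instance] SigFintype

lemma closure_card_le {Phi : Type} [DecidableEq Phi] (φ : HForm Phi) :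
    φ.closure.card ≤ φ.size := by
  induction φ with
  | atom p => simp [HForm.closure, HForm.size]
  | bot => simp [HForm.closure, HForm.size]
  | imp a b iha ihb =>
      calc (HForm.imp a b).closure.card ≤ (a.closure ∪ b.closure).card + 1 :=
            Finset.card_insert_le _ _
        _ ≤ (a.closure.card + b.closure.card) + 1 :=
            Nat.add_le_add_right (Finset.card_union_le _ _) 1
        _ ≤ a.size + b.size + 1 := by omega
        _ = (HForm.imp a b).size := rfl
  | diaS a ih =>
      calc (HForm.diaS a).closure.card ≤ a.closure.card + 1 := Finset.card_insert_le _ _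
        _ ≤ a.size + 1 := by omega
  | diaT a ih =>
      calc (HForm.diaT a).closure.card ≤ a.closure.card + 1 := Finset.card_insert_le _ _
        _ ≤ a.size + 1 := by omega

lemma Nbound_zero : Nbound 0 = 1 := by simp [Nbound]

lemma Nbound_succ (n : ℕ) : Nbound (n + 1) = 1 + 2 * (n + 1) * Nbound n := by
  unfold Nbound
  rw [Finset.sum_range_succ' (fun k => 2 ^ k * (n + 1).descFactorial k)]
  have h : ∀ k ∈ Finset.range (n + 1),
      2 ^ (k + 1) * (n + 1).descFactorial (k + 1) =
        2 * (n + 1) * (2 ^ k * n.descFactorial k) := by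
    intro k _
    rw [Nat.succ_descFactorial_succ, pow_succ]
    ring
  rw [Finset.sum_congr rfl h, ← Finset.mul_sum]
  simp [Nat.add_comm]

lemma sig_card_le {Phi : Type} [DecidableEq Phi] (φ : HForm Phi) :
    ∀ n, Fintype.card (Sig φ n) ≤ 2 ^ (φ.size * Nbound n)
  | 0 => by
      have : Fintype.card (Sig φ 0) = 2 ^ φ.closure.card := by
        show Fintype.card ({ψ // ψ ∈ φ.closure} → Prop) = _
        rw [Fintype.card_fun, Fintype.card_prop, Fintype.card_coe]
      rw [this, Nbound_zero, mul_one]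
      exact Nat.pow_le_pow_right (by norm_num) (closure_card_le φ)
  | n + 1 => by
      have ih := sig_card_le φ n
      have hc : Fintype.card (Sig φ (n + 1)) =
          2 ^ φ.closure.card *
            (Fintype.card (Sig φ n) * Fintype.card (Sig φ n)) ^ (n + 1) := by
        show Fintype.card (({ψ // ψ ∈ φ.closure} → Prop) ×
          (Fin (n + 1) → Sig φ n × Sig φ n)) = _
        simp [Fintype.card_fun, Fintype.card_prop, Fintype.card_coe]
      rw [hc, Nbound_succ]
      calc 2 ^ φ.closure.card *
            (Fintype.card (Sig φ n) * Fintype.card (Sig φ n)) ^ (n + 1)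
          ≤ 2 ^ φ.size * (2 ^ (φ.size * Nbound n) * 2 ^ (φ.size * Nbound n)) ^ (n + 1) := by
            exact Nat.mul_le_mul
              (Nat.pow_le_pow_right (by norm_num) (closure_card_le φ))
              (Nat.pow_le_pow_left (Nat.mul_le_mul ih ih) _)
        _ = 2 ^ (φ.size * (1 + 2 * (n + 1) * Nbound n)) := by
            rw [← pow_add, ← pow_mul, ← pow_add]
            congr 1
            ring

/-- The signature of a cell. -/
def sig {Phi : Type} [DecidableEq Phi] (M : HDMLModel Phi) (φ : HForm Phi) :
    ∀ n, M.pre.cell n → Sig φ n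
  | 0, q => fun ψ => M.Sat ψ.1 0 q
  | n + 1, q =>
      (⟨fun ψ => M.Sat ψ.1 (n + 1) q,
        fun i => (sig M φ n (M.pre.src n i q), sig M φ n (M.pre.tgt n i q))⟩ :
        ({ψ // ψ ∈ φ.closure} → Prop) × (Fin (n + 1) → Sig φ n × Sig φ n))

lemma fun_eq_iff {Phi : Type} [DecidableEq Phi] {φ : HForm Phi}
    {P Q : {ψ // ψ ∈ φ.closure} → Prop} :
    P = Q ↔ ∀ ψ (h : ψ ∈ φ.closure), (P ⟨ψ, h⟩ ↔ Q ⟨ψ, h⟩) := by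
  constructor
  · rintro rfl ψ h; rfl
  · intro h; funext ⟨ψ, hψ⟩; exact propext (h ψ hψ)

lemma filtRel_iff_sig {Phi : Type} [DecidableEq Phi] (M : HDMLModel Phi) (φ : HForm Phi) :
    ∀ n (q q' : M.pre.cell n), FiltRel M φ n q q' ↔ sig M φ n q = sig M φ n q'
  | 0, q, q' => by
      show (∀ ψ ∈ φ.closure, (M.Sat ψ 0 q ↔ M.Sat ψ 0 q')) ↔ _
      rw [show sig M φ 0 q = fun ψ => M.Sat ψ.1 0 q from rfl,
        show sig M φ 0 q' = fun ψ => M.Sat ψ.1 0 q' from rfl]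
      exact (fun_eq_iff (φ := φ) (P := fun ψ => M.Sat ψ.1 0 q) (Q := fun ψ => M.Sat ψ.1 0 q')).symm
  | n + 1, q, q' => by
      show ((∀ ψ ∈ φ.closure, (M.Sat ψ (n + 1) q ↔ M.Sat ψ (n + 1) q')) ∧
        ∀ i : Fin (n + 1),
          FiltRel M φ n (M.pre.src n i q) (M.pre.src n i q') ∧
          FiltRel M φ n (M.pre.tgt n i q) (M.pre.tgt n i q')) ↔ _
      have h1 : sig M φ (n + 1) q = sig M φ (n + 1) q' ↔
          ((fun ψ : {ψ // ψ ∈ φ.closure} => M.Sat ψ.1 (n + 1) q) =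
            (fun ψ => M.Sat ψ.1 (n + 1) q')) ∧
          (fun i : Fin (n + 1) =>
              (sig M φ n (M.pre.src n i q), sig M φ n (M.pre.tgt n i q))) =
          (fun i => (sig M φ n (M.pre.src n i q'), sig M φ n (M.pre.tgt n i q'))) :=
        Prod.ext_iff
      rw [h1, fun_eq_iff, funext_iff]
      simp only [Prod.mk.injEq]
      constructor
      · rintro ⟨h, hi⟩
        exact ⟨h, fun i => ⟨(filtRel_iff_sig M φ n _ _).1 (hi i).1,
          (filtRel_iff_sig M φ n _ _).1 (hi i).2⟩⟩
      · rintro ⟨h, hi⟩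
        exact ⟨h, fun i => ⟨(filtRel_iff_sig M φ n _ _).2 (hi i).1,
          (filtRel_iff_sig M φ n _ _).2 (hi i).2⟩⟩

/-- Each level `Q_n^f` of the filtration is finite, of size at most
`2^{|φ|·N}` where `N = n! · Σ_{k=0}^{n} 2^k/(n−k)!`. -/
theorem filtration_level_size {Phi : Type} [DecidableEq Phi] (M : HDMLModel Phi)
    (φ : HForm Phi) (n : ℕ) :
    (Set.range (filtClass M φ n)).Finite ∧
    Nat.card (Set.range (filtClass M φ n)) ≤ 2 ^ (φ.size * Nbound n) := by
    classical
  set g : Sig φ n → Set (M.pre.cell n) := fun s => {x | sig M φ n x = s} with hg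
  have hcls : ∀ q, filtClass M φ n q = g (sig M φ n q) := by
    intro q
    ext x
    simp only [filtClass, hg, Set.mem_setOf_eq, filtRel_iff_sig, eq_comm]
  have hsub : Set.range (filtClass M φ n) ⊆ Set.range g := by
    rintro S ⟨q, rfl⟩
    exact ⟨sig M φ n q, (hcls q).symm⟩
  have hfin : (Set.range g).Finite := Set.finite_range g
  refine ⟨hfin.subset hsub, ?_⟩
  calc Nat.card (Set.range (filtClass M φ n)) ≤ Nat.card (Set.range g) :=
        Nat.card_mono hfin hsub
    _ ≤ Nat.card (Sig φ n) := Finite.card_range_le g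
    _ = Fintype.card (Sig φ n) := Nat.card_eq_fintype_card
    _ ≤ 2 ^ (φ.size * Nbound n) := sig_card_le φ n
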